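/- The unique minimizer of f₀(X) = log det(X^{-1}) over symmetric positive definite r×r matrices X subject to eᵀXe ≤ a and X ≥ 0 (entrywise) is X* = (a/r)·I, for any a > 0. -/

import Mathlib

open Matrix BigOperators

lemma stmt13_trace_eq_sum_eig {r : ℕ} (A : Matrix (Fin r) (Fin r) ℝ) (hA : A.IsHermitian) :
    A.trace = ∑ i, hA.eigenvalues i := by
  conv_lhs => rw [hA.spectral_theorem, Unitary.conjStarAlgAut_apply]
  rw [Matrix.trace_mul_cycle]
  rw [(Matrix.mem_unitaryGroup_iff'.mp (hA.eigenvectorUnitary).2)]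
  simp [Matrix.trace_diagonal]

lemma stmt13_eq_smul_one {r : ℕ} (A : Matrix (Fin r) (Fin r) ℝ) (hA : A.IsHermitian) (c : ℝ)
    (h : ∀ i, hA.eigenvalues i = c) : A = c • 1 := by
  have hd : Matrix.diagonal (RCLike.ofReal ∘ hA.eigenvalues) = c • (1 : Matrix (Fin r) (Fin r) ℝ) := by
    ext i j
    by_cases hij : i = j <;> simp [hij, Matrix.diagonal, Matrix.one_apply, h]
  conv_lhs => rw [hA.spectral_theorem, hd, Unitary.conjStarAlgAut_apply]
  rw [Matrix.mul_smul, Matrix.smul_mul, Matrix.mul_one,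
    Matrix.mem_unitaryGroup_iff.mp (hA.eigenvectorUnitary).2]

theorem stmt13 {r : ℕ} (hr : 0 < r) (a : ℝ) (ha : 0 < a) :
    (((a / r) • (1 : Matrix (Fin r) (Fin r) ℝ)).PosDef ∧
      (∑ i, ∑ j, ((a / r) • (1 : Matrix (Fin r) (Fin r) ℝ)) i j) ≤ a ∧
      (∀ i j, 0 ≤ ((a / r) • (1 : Matrix (Fin r) (Fin r) ℝ)) i j)) ∧
    ∀ X : Matrix (Fin r) (Fin r) ℝ, X.PosDef → (∑ i, ∑ j, X i j) ≤ a →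
      (∀ i j, 0 ≤ X i j) →
      Real.log (((a / r) • (1 : Matrix (Fin r) (Fin r) ℝ))⁻¹).det ≤ Real.log (X⁻¹).det ∧
      (Real.log (X⁻¹).det = Real.log (((a / r) • (1 : Matrix (Fin r) (Fin r) ℝ))⁻¹).det →
        X = (a / r) • (1 : Matrix (Fin r) (Fin r) ℝ)) := by
  have hrR : (0:ℝ) < r := by exact_mod_cast hr
  set c : ℝ := a / r with hc
  have hcpos : 0 < c := div_pos ha hrR
  have hcr : 0 < c ^ r := pow_pos hcpos r
  -- determinant of the candidate
  have hdetc : ((c • (1 : Matrix (Fin r) (Fin r) ℝ))).det = c ^ r := by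
    rw [Matrix.det_smul]; simp
  have hlogc : Real.log ((c • (1 : Matrix (Fin r) (Fin r) ℝ))⁻¹).det
      = -(r * Real.log c) := by
    rw [Matrix.det_nonsing_inv, hdetc, Ring.inverse_eq_inv', Real.log_inv, Real.log_pow]
  constructor
  · have hdiag : c • (1 : Matrix (Fin r) (Fin r) ℝ) = Matrix.diagonal (fun _ => c) := by
      ext i j; by_cases hij : i = j <;> simp [hij, Matrix.diagonal, Matrix.one_apply]
    refine ⟨hdiag ▸ Matrix.posDef_diagonal_iff.mpr (fun _ => hcpos), ?_, ?_⟩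
    · have : (∑ i : Fin r, ∑ j : Fin r, (c • (1 : Matrix (Fin r) (Fin r) ℝ)) i j) = r * c := by
        simp [Matrix.smul_apply, Matrix.one_apply, Finset.sum_ite_eq, Finset.mul_sum]
      rw [this, hc]; field_simp; exact le_rfl
    · intro i j
      by_cases hij : i = j <;> simp [hij, Matrix.smul_apply, Matrix.one_apply, hcpos.le]
  · intro X hX hsum hnn
    set lam := hX.1.eigenvalues with hlam
    have hpos : ∀ i, 0 < lam i := hX.eigenvalues_pos
    have htr : X.trace = ∑ i, lam i := stmt13_trace_eq_sum_eig X hX.1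
    have htra : X.trace ≤ a := by
      calc X.trace = ∑ i, X i i := by rw [Matrix.trace]; rfl
      _ ≤ ∑ i, ∑ j, X i j := Finset.sum_le_sum fun i _ =>
          Finset.single_le_sum (fun j _ => hnn i j) (Finset.mem_univ i)
      _ ≤ a := hsum
    have htrpos : 0 < X.trace := by
      rw [htr]
      exact Finset.sum_pos (fun i _ => hpos i) (Finset.univ_nonempty_iff.mpr ⟨⟨0, hr⟩⟩)
    have hdet : X.det = ∏ i, lam i := by simpa using hX.1.det_eq_prod_eigenvalues
    have hdetpos : 0 < X.det := hX.det_pos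
    have hw : ∑ _i : Fin r, (1:ℝ)/r = 1 := by
      simp [Finset.sum_const]; field_simp
    have hjensen : ∑ i, ((1:ℝ)/r) • Real.log (lam i) ≤
        Real.log (∑ i, ((1:ℝ)/r) • lam i) :=
      strictConcaveOn_log_Ioi.concaveOn.le_map_sum (fun i _ => by positivity) hw
        (fun i _ => hpos i)
    have hsl : ∑ i, ((1:ℝ)/r) • lam i = X.trace / r := by
      rw [htr, Finset.sum_div]
      exact Finset.sum_congr rfl fun i _ => by rw [smul_eq_mul]; ring
    have h1 : Real.log X.det = ∑ i, Real.log (lam i) := by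
      rw [hdet, Real.log_prod (fun i _ => (hpos i).ne')]
    have hsl2 : ∑ i, ((1:ℝ)/r) • Real.log (lam i) = Real.log X.det / r := by
      rw [h1, Finset.sum_div]
      exact Finset.sum_congr rfl fun i _ => by rw [smul_eq_mul]; ring
    have h2 : Real.log X.det / r ≤ Real.log (X.trace / r) := by
      rw [← hsl2, ← hsl]; exact hjensen
    have h3 : Real.log (X.trace / r) ≤ Real.log c := by
      apply Real.log_le_log (by positivity)
      rw [hc]; gcongr
    have hlogX : Real.log X.det ≤ r * Real.log c := by
      have := h2.trans h3
      calc Real.log X.det = r * (Real.log X.det / r) := by field_simp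
      _ ≤ r * Real.log c := by
          exact mul_le_mul_of_nonneg_left this hrR.le
    have hlogXinv : Real.log (X⁻¹.det) = - Real.log X.det := by
      rw [Matrix.det_nonsing_inv, Ring.inverse_eq_inv', Real.log_inv]
    constructor
    · rw [hlogc, hlogXinv]; linarith
    · intro heq
      rw [hlogc, hlogXinv] at heq
      have hdeq : Real.log X.det = r * Real.log c := by linarith
      -- equality chain
      have e1 : Real.log X.det / r = Real.log c := by
        rw [hdeq]; field_simp
      have e2 : Real.log (X.trace / r) = Real.log c := le_antisymm h3 (e1 ▸ h2)
      have htrc : X.trace / r = c := by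
        have := congrArg Real.exp e2
        rwa [Real.exp_log (by positivity), Real.exp_log hcpos] at this
      have ejensen : Real.log (∑ i, ((1:ℝ)/r) • lam i)
          = ∑ i, ((1:ℝ)/r) • Real.log (lam i) := by
        rw [hsl, hsl2, e1, e2]
      have hall := (strictConcaveOn_log_Ioi.map_sum_eq_iff
        (fun i _ => by positivity) hw (fun i _ => hpos i)).mp ejensen
      have hlamc : ∀ i, lam i = c := by
        intro i
        have := hall i (Finset.mem_univ i)
        rwa [hsl, htrc] at this
      exact stmt13_eq_smul_one X hX.1 c hlamc
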